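/- arXiv:math/0604152 — 4 statements merged into one kernel-verified Lean document; each statement's English description precedes it below -/
import Mathlib

section
/- Let K ⊂ D be a compact set of strictly minimal simple zeros of H. Then for every sufficiently small ε₁ > 0 there exists δ₁ > 0 such that for all (ζ,ω) ∈ K, H has no zeros in the set {(z,w) ∈ ℂ² : |z| = |ζ|, |arg(z/ζ)| ≥ ε₁, |w| ≤ (1+δ₁)·|ω|} (here |arg(z/ζ)| ≥ ε₁ means z = |z|e^{iθ}ζ/|ζ| for some θ with ε₁ ≤ |θ| ≤ π). -/
open Complex Filter Topology

/-- The open polydisk centered at the origin in `ℂ²` with radii `R₁`, `R₂`. -/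
def polyDisk (R₁ R₂ : ℝ) : Set (ℂ × ℂ) :=
  {p : ℂ × ℂ | ‖p.1‖ < R₁ ∧ ‖p.2‖ < R₂}

/-- `(ζ,ω)` is a strictly minimal simple zero of `H`: `H(ζ,ω) = 0`, the gradient
`∇H(ζ,ω) ≠ 0`, `ζ·ω ≠ 0`, and `(ζ,ω)` is the only zero of `H` in the closed polydisk
`{|z| ≤ |ζ|, |w| ≤ |ω|}`. -/
def StrictlyMinimalSimpleZero (H : ℂ × ℂ → ℂ) (p : ℂ × ℂ) : Prop :=
  H p = 0 ∧ fderiv ℂ H p ≠ 0 ∧ p.1 * p.2 ≠ 0 ∧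
    ∀ q : ℂ × ℂ, ‖q.1‖ ≤ ‖p.1‖ → ‖q.2‖ ≤ ‖p.2‖ →
      H q = 0 → q = p

/-- auxiliary parametrization map -/
noncomputable def auxPhi : (ℂ × ℂ) × ℝ × ℂ → ℂ × ℂ :=
  fun x => (Complex.exp ((x.2.1 : ℂ) * Complex.I) * x.1.1, x.2.2 * x.1.2)

theorem auxPhi_apply (p : ℂ × ℂ) (θ : ℝ) (t : ℂ) :
    auxPhi (p, θ, t) = (Complex.exp ((θ : ℂ) * Complex.I) * p.1, t * p.2) := rfl

/-- Lemma 3.1: for all sufficiently small `ε₁ > 0` there is `δ₁ > 0` such that for all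
`(ζ,ω) ∈ K`, `H` is zero-free on
`{(z,w) : |z| = |ζ|, |arg(z/ζ)| ≥ ε₁, |w| ≤ (1+δ₁)|ω|}`. -/
theorem stmt0 (R₁ R₂ : ℝ) (hR₁ : 0 < R₁) (hR₂ : 0 < R₂) (H : ℂ × ℂ → ℂ)
    (hH : AnalyticOnNhd ℂ H (polyDisk R₁ R₂)) (hH0 : H (0, 0) ≠ 0)
    (K : Set (ℂ × ℂ)) (hKcpt : IsCompact K) (hKD : K ⊆ polyDisk R₁ R₂)
    (hK : ∀ p ∈ K, StrictlyMinimalSimpleZero H p) :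
    ∃ ε₀ > 0, ∀ ε₁ : ℝ, 0 < ε₁ → ε₁ < ε₀ →
      ∃ δ₁ > 0, ∀ p ∈ K, ∀ z w : ℂ,
        ‖z‖ = ‖p.1‖ →
        (∃ θ : ℝ, ε₁ ≤ |θ| ∧ |θ| ≤ Real.pi ∧
          z = (‖z‖ : ℂ) * Complex.exp ((θ : ℂ) * Complex.I) *
            (p.1 / (‖p.1‖ : ℂ))) →
        ‖w‖ ≤ (1 + δ₁) * ‖p.2‖ →
        H (z, w) ≠ 0 := by
  refine ⟨1, one_pos, fun ε₁ hε₁ _ => ?_⟩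
  have hauxPhic : Continuous auxPhi := by
    unfold auxPhi
    apply Continuous.prodMk
    · exact ((Complex.continuous_ofReal.comp (continuous_fst.comp continuous_snd)).mul
        continuous_const).cexp.mul (continuous_fst.comp continuous_fst)
    · exact (continuous_snd.comp continuous_snd).mul (continuous_snd.comp continuous_fst)
  have hOpen : IsOpen (polyDisk R₁ R₂) := by
    have h1 : IsOpen {p : ℂ × ℂ | ‖p.1‖ < R₁} :=
      isOpen_lt (continuous_norm.comp continuous_fst) continuous_const
    have h2 : IsOpen {p : ℂ × ℂ | ‖p.2‖ < R₂} :=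
      isOpen_lt (continuous_norm.comp continuous_snd) continuous_const
    exact h1.inter h2
  set U : Set ((ℂ × ℂ) × ℝ × ℂ) := auxPhi ⁻¹' polyDisk R₁ R₂ with hUdef
  have hUopen : IsOpen U := hOpen.preimage hauxPhic
  have hgc : ContinuousOn (H ∘ auxPhi) U :=
    hH.continuousOn.comp hauxPhic.continuousOn (fun x hx => hx)
  set T : Set ℝ := {θ | ε₁ ≤ |θ| ∧ |θ| ≤ Real.pi} with hTdef
  have hTc : IsCompact T := by
    refine (isCompact_Icc (a := -Real.pi) (b := Real.pi)).of_isClosed_subset ?_ ?_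
    · exact (isClosed_le continuous_const _root_.continuous_abs).inter
        (isClosed_le _root_.continuous_abs continuous_const)
    · intro θ hθ
      exact abs_le.mp hθ.2
  set A : Set ((ℂ × ℂ) × ℝ × ℂ) := K ×ˢ (T ×ˢ Metric.closedBall (0:ℂ) 1) with hAdef
  have hAc : IsCompact A := hKcpt.prod (hTc.prod (isCompact_closedBall _ _))
  have hzero : ∀ p ∈ K, p.1 ≠ 0 ∧ p.2 ≠ 0 := fun p hp => by
    have h := (hK p hp).2.2.1
    exact ⟨left_ne_zero_of_mul h, right_ne_zero_of_mul h⟩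
  have hAU : A ⊆ U := by
    rintro ⟨p, θ, t⟩ ⟨hp, hθ, ht⟩
    have h1 : ‖Complex.exp ((θ:ℂ) * Complex.I) * p.1‖ = ‖p.1‖ := by
      rw [norm_mul, Complex.norm_exp_ofReal_mul_I, one_mul]
    have ht1 : ‖t‖ ≤ 1 := by
      simpa [Complex.dist_eq] using Metric.mem_closedBall.mp ht
    have h2 : ‖t * p.2‖ ≤ ‖p.2‖ := by
      rw [norm_mul]
      exact mul_le_of_le_one_left (norm_nonneg _) ht1
    have hpD := hKD hp
    exact ⟨h1.trans_lt hpD.1, h2.trans_lt hpD.2⟩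
  set V : Set ((ℂ × ℂ) × ℝ × ℂ) := U ∩ (H ∘ auxPhi) ⁻¹' {(0:ℂ)}ᶜ with hVdef
  have hVopen : IsOpen V := hgc.isOpen_inter_preimage hUopen isOpen_compl_singleton
  have hAV : A ⊆ V := by
    rintro ⟨p, θ, t⟩ hx
    obtain ⟨hp, hθ, ht⟩ := hx
    refine ⟨hAU ⟨hp, hθ, ht⟩, ?_⟩
    simp only [Set.mem_preimage, Set.mem_compl_iff, Set.mem_singleton_iff, Function.comp_apply,
      auxPhi_apply]
    intro hzero'
    have h1 : ‖Complex.exp ((θ:ℂ) * Complex.I) * p.1‖ ≤ ‖p.1‖ := by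
      rw [norm_mul, Complex.norm_exp_ofReal_mul_I, one_mul]
    have ht1 : ‖t‖ ≤ 1 := by
      simpa [Complex.dist_eq] using Metric.mem_closedBall.mp ht
    have h2 : ‖t * p.2‖ ≤ ‖p.2‖ := by
      rw [norm_mul]
      exact mul_le_of_le_one_left (norm_nonneg _) ht1
    have heq := (hK p hp).2.2.2 (Complex.exp ((θ:ℂ) * Complex.I) * p.1, t * p.2) h1 h2 hzero'
    have hfst : Complex.exp ((θ:ℂ) * Complex.I) * p.1 = p.1 := congrArg Prod.fst heq
    have hp1 : p.1 ≠ 0 := (hzero p hp).1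
    have hexp1 : Complex.exp ((θ:ℂ) * Complex.I) = 1 :=
      mul_right_cancel₀ hp1 (hfst.trans (one_mul p.1).symm)
    obtain ⟨n, hn⟩ := Complex.exp_eq_one_iff.mp hexp1
    have hI : (Complex.I : ℂ) ≠ 0 := Complex.I_ne_zero
    have hθn : (θ : ℂ) = (n : ℂ) * (2 * Real.pi) := by
      have : (θ:ℂ) * Complex.I = ((n:ℂ) * (2 * Real.pi)) * Complex.I := by
        rw [hn]; ring
      exact mul_right_cancel₀ hI this
    have hθr : θ = (n : ℝ) * (2 * Real.pi) := by
      have := hθn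
      push_cast at this ⊢
      exact_mod_cast this
    rcases eq_or_ne n 0 with h0 | h0
    · rw [h0] at hθr; simp at hθr
      have := hθ.1
      rw [hθr] at this
      simp at this
      linarith
    · have h1n : (1:ℝ) ≤ |(n:ℝ)| := by
        rw [← Int.cast_abs]
        exact_mod_cast Int.one_le_abs h0
      have : 2 * Real.pi ≤ |θ| := by
        rw [hθr, abs_mul]
        have h2π : |2 * Real.pi| = 2 * Real.pi := abs_of_pos (by positivity)
        rw [h2π]
        nlinarith [Real.pi_pos]
      nlinarith [hθ.2, Real.pi_pos]
  obtain ⟨δ, hδpos, hsub⟩ := hAc.exists_thickening_subset_open hVopen hAV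
  refine ⟨δ/2, by positivity, ?_⟩
  rintro p hp z w habs ⟨θ, hθ1, hθ2, hzeq⟩ hw
  have hp1 : p.1 ≠ 0 := (hzero p hp).1
  have hp2 : p.2 ≠ 0 := (hzero p hp).2
  have hap1 : ‖p.1‖ ≠ 0 := by simpa using hp1
  set t : ℂ := w / p.2 with htdef
  have hap1C : (‖p.1‖ : ℂ) ≠ 0 := by exact_mod_cast hap1
  have hzw : (z, w) = auxPhi (p, θ, t) := by
    rw [auxPhi_apply]
    simp only [Prod.mk.injEq]
    constructor
    · rw [hzeq, habs]
      field_simp [hap1C]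
    · rw [htdef]
      exact (div_mul_cancel₀ w hp2).symm
  set c : ℝ := 1 + δ/2 with hcdef
  have hc : (0:ℝ) < c := by positivity
  have hcC : ((c : ℝ) : ℂ) ≠ 0 := by exact_mod_cast hc.ne'
  have htle : ‖t‖ ≤ c := by
    rw [htdef, norm_div, div_le_iff₀ (norm_pos_iff.mpr hp2)]
    calc ‖w‖ ≤ (1 + δ/2) * ‖p.2‖ := hw
    _ = c * ‖p.2‖ := by rw [hcdef]
  have hmem : (p, θ, t) ∈ Metric.thickening δ A := by
    rw [Metric.mem_thickening_iff]
    refine ⟨(p, θ, t / ((c:ℝ):ℂ)), ⟨hp, ⟨hθ1, hθ2⟩, ?_⟩, ?_⟩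
    · rw [Metric.mem_closedBall, Complex.dist_eq, sub_zero]
      show ‖t / ((c:ℝ):ℂ)‖ ≤ 1
      rw [norm_div, Complex.norm_real, Real.norm_eq_abs,
        abs_of_pos hc, div_le_one hc]
      exact htle
    · have hd : dist ((p, θ, t) : (ℂ × ℂ) × ℝ × ℂ) (p, θ, t / ((c:ℝ):ℂ)) =
          dist t (t / ((c:ℝ):ℂ)) := by
        simp [Prod.dist_eq, dist_nonneg, max_eq_right]
      rw [hd, Complex.dist_eq]
      have hts : t - t / ((c:ℝ):ℂ) = t * ((δ/2 : ℝ) : ℂ) / ((c:ℝ):ℂ) := by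
        have h1 : ((δ/2 : ℝ) : ℂ) = ((c:ℝ):ℂ) - 1 := by rw [hcdef]; push_cast; ring
        rw [h1, mul_sub, mul_one, sub_div, mul_div_cancel_right₀ t hcC]
      rw [hts, norm_div, norm_mul, Complex.norm_real, Real.norm_eq_abs, Complex.norm_real, Real.norm_eq_abs,
        abs_of_pos (by positivity : (0:ℝ) < δ/2), abs_of_pos hc]
      have h1 : ‖t‖ * (δ/2) / c ≤ δ/2 := by
        rw [div_le_iff₀ hc]
        calc ‖t‖ * (δ/2) ≤ c * (δ/2) :=
              mul_le_mul_of_nonneg_right htle (by positivity)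
        _ = δ/2 * c := by ring
      linarith
  have hV := hsub hmem
  have hne := hV.2
  simp only [Set.mem_preimage, Set.mem_compl_iff, Set.mem_singleton_iff,
    Function.comp_apply] at hne
  rw [hzw]
  exact hne
end

section
/- Let (ζ_c,ω_c) ∈ D be a strictly minimal simple zero of H with H_w(ζ_c,ω_c) ≠ 0, and let w = g(z) be the analytic parametrization of the zero set of H near (ζ_c,ω_c) given by the implicit function theorem (so g(ζ_c) = ω_c and, near (ζ_c,ω_c), H(z,w) = 0 iff w = g(z)). Then for all sufficiently small ε₂ > 0 there exists δ₂ > 0 such that every zero (z,w) of H with |z − ζ_c| < ε₂ and |w| ≤ (1+δ₂)·|g(z)| satisfies w = g(z). -/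
open Complex Filter Topology

/-- Partial derivative of `H` with respect to the second variable. -/
noncomputable def Hw (H : ℂ × ℂ → ℂ) (p : ℂ × ℂ) : ℂ := deriv (fun w => H (p.1, w)) p.2

/-- Lemma 3.2: for all sufficiently small `ε₂ > 0` there is `δ₂ > 0` such that every zero
`(z,w)` of `H` with `|z − ζ_c| < ε₂` and `|w| ≤ (1+δ₂)|g(z)|` satisfies `w = g(z)`. -/
theorem stmt1 (R₁ R₂ : ℝ) (hR₁ : 0 < R₁) (hR₂ : 0 < R₂) (H : ℂ × ℂ → ℂ)
    (hH : AnalyticOnNhd ℂ H (polyDisk R₁ R₂)) (hH0 : H (0, 0) ≠ 0)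
    (ζc ωc : ℂ) (hD : (ζc, ωc) ∈ polyDisk R₁ R₂)
    (hmin : StrictlyMinimalSimpleZero H (ζc, ωc))
    (hHw : Hw H (ζc, ωc) ≠ 0)
    (g : ℂ → ℂ) (hg : AnalyticAt ℂ g ζc) (hgc : g ζc = ωc)
    (hparam : ∀ᶠ p : ℂ × ℂ in 𝓝 (ζc, ωc), (H p = 0 ↔ p.2 = g p.1)) :
    ∃ ε₀ > 0, ∀ ε₂ : ℝ, 0 < ε₂ → ε₂ < ε₀ →
      ∃ δ₂ > 0, ∀ z w : ℂ, ‖z - ζc‖ < ε₂ →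
        ‖w‖ ≤ (1 + δ₂) * ‖g z‖ → H (z, w) = 0 → w = g z := by
  classical
  obtain ⟨hHzero, -, hzw, hminimal⟩ := hmin
  have hζR : ‖ζc‖ < R₁ := hD.1
  have hωR : ‖ωc‖ < R₂ := hD.2
  have hω0 : ωc ≠ 0 := fun h => hzw (by simp [h])
  have hωpos : 0 < ‖ωc‖ := norm_pos_iff.mpr hω0
  obtain ⟨U, hUs, hUopen, hUmem⟩ := mem_nhds_iff.mp hparam
  set εK : ℝ := min 1 ((R₁ - ‖ζc‖) / 2) with hεKdef
  have hεKpos : 0 < εK := lt_min one_pos (by linarith)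
  have hεKle : εK ≤ (R₁ - ‖ζc‖) / 2 := min_le_right _ _
  set r₀ : ℝ := (‖ωc‖ + R₂) / 2 with hr₀def
  have hr₀1 : ‖ωc‖ < r₀ := by rw [hr₀def]; linarith
  have hr₀2 : r₀ < R₂ := by rw [hr₀def]; linarith
  set K : Set (ℂ × ℂ) := (Metric.closedBall ζc εK) ×ˢ (Metric.closedBall (0 : ℂ) r₀) with hKdef
  have hKcomp : IsCompact K := (isCompact_closedBall _ _).prod (isCompact_closedBall _ _)
  have hKclosed : IsClosed K := (Metric.isClosed_closedBall).prod (Metric.isClosed_closedBall)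
  have hKsub : K ⊆ polyDisk R₁ R₂ := by
    rintro ⟨z, w⟩ ⟨hz, hw⟩
    simp only [Metric.mem_closedBall, Complex.dist_eq, sub_zero] at hz hw
    constructor
    · have h2 : ‖z‖ ≤ ‖z - ζc‖ + ‖ζc‖ := by
        calc ‖z‖ = ‖(z - ζc) + ζc‖ := by ring_nf
        _ ≤ ‖z - ζc‖ + ‖ζc‖ := norm_add_le _ _
      show ‖z‖ < R₁
      calc ‖z‖ ≤ ‖z - ζc‖ + ‖ζc‖ := h2
        _ ≤ (R₁ - ‖ζc‖) / 2 + ‖ζc‖ := by linarith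
        _ < R₁ := by linarith
    · exact lt_of_le_of_lt hw hr₀2
  have hcontK : ContinuousOn H K := (hH.continuousOn).mono hKsub
  set Z : Set (ℂ × ℂ) := {p | p ∈ K ∧ H p = 0 ∧ p ∉ U} with hZdef
  have hZclosed : IsClosed Z := by
    have h1 : Z = (K ∩ H ⁻¹' {0}) ∩ Uᶜ := by
      ext p
      simp only [hZdef, Set.mem_setOf_eq, Set.mem_inter_iff, Set.mem_preimage,
        Set.mem_singleton_iff, Set.mem_compl_iff]
      tauto
    rw [h1]
    exact ((hcontK.preimage_isClosed_of_isClosed hKclosed isClosed_singleton)).inter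
      hUopen.isClosed_compl
  have hZcomp : IsCompact Z := hKcomp.of_isClosed_subset hZclosed (fun p hp => hp.1)
  obtain ⟨c, hcpos, hc⟩ : ∃ c > 0, ∀ p ∈ Z,
      c ≤ max (‖p.1 - ζc‖) (‖p.2‖ - ‖ωc‖) := by
    rcases Z.eq_empty_or_nonempty with hZe | hZne
    · exact ⟨1, one_pos, by simp [hZe]⟩
    · have hφcont : Continuous fun p : ℂ × ℂ =>
          max (‖p.1 - ζc‖) (‖p.2‖ - ‖ωc‖) := by
        apply Continuous.max
        · exact continuous_norm.comp (continuous_fst.sub continuous_const)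
        · exact (continuous_norm.comp continuous_snd).sub continuous_const
      obtain ⟨p₀, hp₀Z, hp₀min⟩ := hZcomp.exists_isMinOn hZne hφcont.continuousOn
      refine ⟨_, ?_, fun p hp => hp₀min hp⟩
      by_contra hle
      push_neg at hle
      have h1 : ‖p₀.1 - ζc‖ ≤ 0 := le_trans (le_max_left _ _) hle
      have h2 : ‖p₀.2‖ - ‖ωc‖ ≤ 0 := le_trans (le_max_right _ _) hle
      have hz1 : p₀.1 = ζc := by
        have h3 : ‖p₀.1 - ζc‖ = 0 := le_antisymm h1 (norm_nonneg _)
        have h4 := norm_eq_zero.mp h3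
        exact sub_eq_zero.mp h4
      have hzle : ‖p₀.1‖ ≤ ‖(ζc, ωc).1‖ := by rw [hz1]
      have hwle : ‖p₀.2‖ ≤ ‖(ζc, ωc).2‖ := by
        simp only []
        linarith
      have heq := hminimal p₀ hzle hwle hp₀Z.2.1
      exact hp₀Z.2.2 (by rw [heq]; exact hUmem)
  set δ₀ : ℝ := min 1 (min ((R₂ - ‖ωc‖) / (4 * ‖ωc‖))
    (c / (2 * ‖ωc‖))) with hδ₀def
  have hδ₀pos : 0 < δ₀ := by
    apply lt_min one_pos
    apply lt_min
    · exact div_pos (by linarith) (by positivity)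
    · exact div_pos hcpos (by positivity)
  have hδ₀1 : δ₀ ≤ 1 := min_le_left _ _
  have hδ₀r : δ₀ * ‖ωc‖ ≤ (R₂ - ‖ωc‖) / 4 := by
    have h1 : δ₀ ≤ (R₂ - ‖ωc‖) / (4 * ‖ωc‖) :=
      le_trans (min_le_right _ _) (min_le_left _ _)
    have h2 : δ₀ * (4 * ‖ωc‖) ≤ R₂ - ‖ωc‖ :=
      (le_div_iff₀ (by positivity)).mp h1
    nlinarith
  have hδ₀c : δ₀ * ‖ωc‖ ≤ c / 2 := by
    have h1 : δ₀ ≤ c / (2 * ‖ωc‖) :=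
      le_trans (min_le_right _ _) (min_le_right _ _)
    have h2 : δ₀ * (2 * ‖ωc‖) ≤ c :=
      (le_div_iff₀ (by positivity)).mp h1
    nlinarith
  have claimA : ∀ p : ℂ × ℂ, ‖p.1 - ζc‖ < min εK c →
      ‖p.2‖ ≤ (1 + δ₀) * ‖ωc‖ → H p = 0 → p ∈ U := by
    intro p hz hw hHp
    by_contra hpU
    have hpK : p ∈ K := by
      constructor
      · rw [Metric.mem_closedBall, Complex.dist_eq]
        exact le_of_lt (lt_of_lt_of_le hz (min_le_left _ _))
      · rw [Metric.mem_closedBall, Complex.dist_eq, sub_zero]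
        have : (1 + δ₀) * ‖ωc‖ = ‖ωc‖ + δ₀ * ‖ωc‖ := by ring
        rw [this] at hw
        rw [hr₀def]
        linarith
    have hpZ : p ∈ Z := ⟨hpK, hHp, hpU⟩
    have hle := hc p hpZ
    have h1 : ‖p.1 - ζc‖ < c := lt_of_lt_of_le hz (min_le_right _ _)
    have h2 : ‖p.2‖ - ‖ωc‖ < c := by nlinarith
    exact absurd hle (not_le.mpr (max_lt h1 h2))
  have hglt : ∀ᶠ z in 𝓝 ζc, ‖g z‖ < (1 + δ₀ / 4) * ‖ωc‖ := by
    have ht : Tendsto (fun z => ‖g z‖) (𝓝 ζc) (𝓝 (‖ωc‖)) := by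
      have h1 : ContinuousAt (fun z => ‖g z‖) ζc :=
        continuous_norm.continuousAt.comp hg.continuousAt
      have := h1.tendsto
      rwa [hgc] at this
    have hlt : ‖ωc‖ < (1 + δ₀ / 4) * ‖ωc‖ := by nlinarith
    exact ht.eventually_lt_const hlt
  obtain ⟨εg, hεgpos, hεg⟩ := Metric.eventually_nhds_iff.mp hglt
  refine ⟨min (min εK c) εg, by positivity, ?_⟩
  intro ε₂ hε₂pos hε₂lt
  refine ⟨δ₀ / 4, by positivity, ?_⟩
  intro z w hzε hwb hHzw
  have hzlt : ‖z - ζc‖ < min (min εK c) εg := lt_trans hzε hε₂lt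
  have hzg : ‖g z‖ < (1 + δ₀ / 4) * ‖ωc‖ := by
    apply hεg
    rw [Complex.dist_eq]
    exact lt_of_lt_of_le hzlt (min_le_right _ _)
  have hwbound : ‖w‖ ≤ (1 + δ₀) * ‖ωc‖ := by
    have h1 : ‖w‖ ≤ (1 + δ₀ / 4) * ‖g z‖ := hwb
    have h2 : (0:ℝ) ≤ ‖g z‖ := norm_nonneg _
    have h3 : (1 + δ₀ / 4) * ‖g z‖ ≤
        (1 + δ₀ / 4) * ((1 + δ₀ / 4) * ‖ωc‖) :=
      mul_le_mul_of_nonneg_left hzg.le (by positivity)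
    have h4 : δ₀ * (δ₀ * ‖ωc‖) ≤ 1 * (δ₀ * ‖ωc‖) :=
      mul_le_mul_of_nonneg_right hδ₀1 (mul_nonneg hδ₀pos.le (norm_nonneg ωc))
    nlinarith
  have hU : (z, w) ∈ U := by
    apply claimA (z, w)
    · exact lt_of_lt_of_le hzlt (min_le_left _ _)
    · exact hwbound
    · exact hHzw
  exact (hUs hU).mp hHzw
end

section
/- For all sufficiently small ε > 0 the following hold: (i) f(ζ,0) = 0 and ∂f/∂θ(ζ,0) = 0 for all ζ sufficiently close to ζ_c; (ii) for all strictly minimal simple zeros (ζ,ω) ∈ K sufficiently close to (ζ_c,ω_c) and all nonzero θ with −ε ≤ θ ≤ ε, one has Re f(ζ,θ) > 0. -/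
open Complex Filter Topology

/-- The derived amplitude term
`a(ζ,θ) := −G(ζe^{iθ}, g(ζe^{iθ})) / (g(ζe^{iθ})·H_w(ζe^{iθ}, g(ζe^{iθ})))`. -/
noncomputable def amp (G H : ℂ × ℂ → ℂ) (g : ℂ → ℂ) (ζ θ : ℂ) : ℂ :=
  -G (ζ * Complex.exp (θ * Complex.I), g (ζ * Complex.exp (θ * Complex.I))) /
    (g (ζ * Complex.exp (θ * Complex.I)) *
      Hw H (ζ * Complex.exp (θ * Complex.I), g (ζ * Complex.exp (θ * Complex.I))))

/-- The derived phase term `f(ζ,θ) := log(g(ζe^{iθ})/g(ζ)) − iθ·ζ·g'(ζ)/g(ζ)`. -/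
noncomputable def phase (g : ℂ → ℂ) (ζ θ : ℂ) : ℂ :=
  Complex.log (g (ζ * Complex.exp (θ * Complex.I)) / g ζ)
    - Complex.I * θ * (ζ * deriv g ζ / g ζ)

lemma inner_hasDerivAt (g : ℂ → ℂ) (ζ : ℂ) (h1 : DifferentiableAt ℂ g ζ) :
    HasDerivAt (fun θ : ℂ => g (ζ * Complex.exp (θ * Complex.I)))
      (deriv g ζ * (ζ * Complex.I)) 0 := by
  have hv : HasDerivAt (fun θ : ℂ => ζ * Complex.exp (θ * Complex.I)) (ζ * Complex.I) 0 := by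
    have h := (((hasDerivAt_id (0 : ℂ)).mul_const Complex.I).cexp).const_mul ζ
    simpa using h
  have hg' : HasDerivAt g (deriv g ζ) ((fun θ : ℂ => ζ * Complex.exp (θ * Complex.I)) 0) := by
    simpa using h1.hasDerivAt
  exact hg'.comp 0 hv

lemma keyDeriv (g : ℂ → ℂ) (ζ : ℂ) (h1 : DifferentiableAt ℂ g ζ) (h2 : g ζ ≠ 0) :
    HasDerivAt (fun θ : ℂ => Complex.log (g (ζ * Complex.exp (θ * Complex.I)) / g ζ))
      (Complex.I * (ζ * deriv g ζ / g ζ)) 0 := by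
  have hval : g (ζ * Complex.exp ((0:ℂ) * Complex.I)) / g ζ = 1 := by
    simp [div_self h2]
  have h := ((inner_hasDerivAt g ζ h1).div_const (g ζ)).clog
    (by rw [hval]; exact Complex.one_mem_slitPlane)
  rw [hval] at h
  convert h using 1
  field_simp

set_option maxHeartbeats 1000000 in
/-- Part of Lemma 3.3: for all sufficiently small `ε > 0`: (i) `f(ζ,0) = 0` and
`∂f/∂θ(ζ,0) = 0` for all `ζ` sufficiently close to `ζ_c`; (ii) for all strictly minimal
simple zeros `(ζ,ω) ∈ K` sufficiently close to `(ζ_c,ω_c)` and all nonzero `θ ∈ [−ε,ε]`,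
`Re f(ζ,θ) > 0`. -/
theorem stmt2 (R₁ R₂ : ℝ) (hR₁ : 0 < R₁) (hR₂ : 0 < R₂) (G H : ℂ × ℂ → ℂ)
    (hG : AnalyticOnNhd ℂ G (polyDisk R₁ R₂)) (hH : AnalyticOnNhd ℂ H (polyDisk R₁ R₂))
    (hH0 : H (0, 0) ≠ 0)
    (K : Set (ℂ × ℂ)) (hKcpt : IsCompact K) (hKD : K ⊆ polyDisk R₁ R₂)
    (hK : ∀ p ∈ K, StrictlyMinimalSimpleZero H p)
    (ζc ωc : ℂ) (hmem : (ζc, ωc) ∈ K) (hHw : Hw H (ζc, ωc) ≠ 0)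
    (g : ℂ → ℂ) (hg : AnalyticAt ℂ g ζc) (hgc : g ζc = ωc)
    (hparam : ∀ᶠ p : ℂ × ℂ in 𝓝 (ζc, ωc), (H p = 0 ↔ p.2 = g p.1)) :
    ∃ ε₀ > 0, ∀ ε : ℝ, 0 < ε → ε ≤ ε₀ →
      (∀ᶠ ζ in 𝓝 ζc, phase g ζ 0 = 0 ∧ deriv (phase g ζ) 0 = 0) ∧
      ∃ ρ > 0, ∀ p ∈ K, dist p (ζc, ωc) < ρ →
        ∀ θ : ℝ, θ ≠ 0 → -ε ≤ θ → θ ≤ ε → 0 < (phase g p.1 (θ : ℂ)).re := by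
  obtain ⟨-, -, hne, -⟩ := hK _ hmem
  have hωc0 : ωc ≠ 0 := fun h => hne (by simp [h])
  -- g is analytic and nonvanishing near ζc
  have hEv : ∀ᶠ ζ in 𝓝 ζc, AnalyticAt ℂ g ζ ∧ g ζ ≠ 0 :=
    hg.eventually_analyticAt.and (hg.continuousAt.eventually_ne (hgc ▸ hωc0))
  obtain ⟨r, hr, hrsub⟩ := Metric.eventually_nhds_iff.mp hEv
  obtain ⟨δ, hδ, hδsub⟩ := Metric.eventually_nhds_iff.mp hparam
  -- continuity of the map q ↦ (q.1·e^{iq.2}, g(q.1·e^{iq.2}))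
  have hm : Continuous (fun q : ℂ × ℝ => q.1 * Complex.exp ((q.2 : ℂ) * Complex.I)) :=
    continuous_fst.mul
      (((Complex.continuous_ofReal.comp continuous_snd).mul continuous_const).cexp)
  have ht1 : Tendsto (fun q : ℂ × ℝ => q.1 * Complex.exp ((q.2 : ℂ) * Complex.I))
      (𝓝 (ζc, 0)) (𝓝 ζc) := by
    have := hm.tendsto (ζc, 0)
    simpa using this
  have ht2 : Tendsto (fun q : ℂ × ℝ =>
        (q.1 * Complex.exp ((q.2 : ℂ) * Complex.I),
          g (q.1 * Complex.exp ((q.2 : ℂ) * Complex.I))))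
      (𝓝 (ζc, 0)) (𝓝 (ζc, ωc)) := by
    have hgt : Tendsto g (𝓝 ζc) (𝓝 ωc) := hgc ▸ hg.continuousAt
    exact ht1.prodMk_nhds (hgt.comp ht1)
  have hev2 : ∀ᶠ q : ℂ × ℝ in 𝓝 (ζc, 0),
      dist (q.1 * Complex.exp ((q.2 : ℂ) * Complex.I)) ζc < r ∧
      dist (q.1 * Complex.exp ((q.2 : ℂ) * Complex.I),
        g (q.1 * Complex.exp ((q.2 : ℂ) * Complex.I))) (ζc, ωc) < δ := by
    have h1 : ∀ᶠ q : ℂ × ℝ in 𝓝 (ζc, 0),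
        dist (q.1 * Complex.exp ((q.2 : ℂ) * Complex.I)) ζc < r :=
      ht1 (Metric.ball_mem_nhds _ hr)
    have h2 : ∀ᶠ q : ℂ × ℝ in 𝓝 (ζc, 0),
        dist (q.1 * Complex.exp ((q.2 : ℂ) * Complex.I),
          g (q.1 * Complex.exp ((q.2 : ℂ) * Complex.I))) (ζc, ωc) < δ :=
      ht2 (Metric.ball_mem_nhds _ hδ)
    exact h1.and h2
  obtain ⟨u, hu, v, hv, huv⟩ := mem_nhds_prod_iff.mp hev2
  obtain ⟨r₂, hr₂, hr₂sub⟩ := Metric.mem_nhds_iff.mp hu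
  obtain ⟨ε₂, hε₂, hε₂sub⟩ := Metric.mem_nhds_iff.mp hv
  have hε₀ : (0:ℝ) < min (ε₂ / 2) 1 := lt_min (by linarith) one_pos
  refine ⟨min (ε₂ / 2) 1, hε₀, fun ε hε hεle => ?_⟩
  constructor
  · -- part (i)
    filter_upwards [hEv] with ζ hζ
    obtain ⟨ha, hgz⟩ := hζ
    constructor
    · simp [phase, div_self hgz]
    · have hlin : HasDerivAt (fun θ : ℂ => Complex.I * θ * (ζ * deriv g ζ / g ζ))
          (Complex.I * (ζ * deriv g ζ / g ζ)) 0 := by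
        simpa using ((hasDerivAt_id (0:ℂ)).const_mul Complex.I).mul_const
          (ζ * deriv g ζ / g ζ)
      have hd := (keyDeriv g ζ ha.differentiableAt hgz).sub hlin
      have hphase : HasDerivAt (phase g ζ)
          (Complex.I * (ζ * deriv g ζ / g ζ) - Complex.I * (ζ * deriv g ζ / g ζ)) 0 := hd
      simpa using hphase.deriv
  · -- part (ii)
    refine ⟨min (min r₂ δ) r, by positivity, fun p hp hdist θ hθ0 hθl hθu => ?_⟩
    obtain ⟨hHp, -, hnep, hminp⟩ := hK p hp
    have hp1ne : p.1 ≠ 0 := fun h => hnep (by simp [h])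
    have hp1d : dist p.1 ζc ≤ dist p (ζc, ωc) := by
      rw [Prod.dist_eq]; exact le_max_left _ _
    have hpδ : dist p (ζc, ωc) < δ :=
      lt_of_lt_of_le hdist (le_trans (min_le_left _ _) (min_le_right _ _))
    have hpU : p.2 = g p.1 := (hδsub hpδ).mp hHp
    have hgp1 : AnalyticAt ℂ g p.1 ∧ g p.1 ≠ 0 :=
      hrsub (lt_of_le_of_lt hp1d (lt_of_lt_of_le hdist (min_le_right _ _)))
    -- for |θ'| ≤ ε₀, the rotated point is in the good neighborhoods
    have hkey : ∀ θ' : ℝ, |θ'| ≤ min (ε₂ / 2) 1 →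
        dist (p.1 * Complex.exp ((θ' : ℂ) * Complex.I)) ζc < r ∧
        dist (p.1 * Complex.exp ((θ' : ℂ) * Complex.I),
          g (p.1 * Complex.exp ((θ' : ℂ) * Complex.I))) (ζc, ωc) < δ := by
      intro θ' hθ'
      have hd1 : p.1 ∈ u := by
        apply hr₂sub
        have : dist p.1 ζc < min (min r₂ δ) r := lt_of_le_of_lt hp1d hdist
        exact lt_of_lt_of_le this (le_trans (min_le_left _ _) (min_le_left _ _))
      have hd2 : θ' ∈ v := by
        apply hε₂sub
        have h1 : |θ'| ≤ ε₂ / 2 := le_trans hθ' (min_le_left _ _)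
        show dist θ' (0:ℝ) < ε₂
        rw [Real.dist_eq, sub_zero]
        linarith
      have h3 := huv (Set.mk_mem_prod hd1 hd2)
      exact h3
    -- strict minimality gives strict growth of |g| along the circle
    have hSMS : ∀ θ' : ℝ, |θ'| ≤ min (ε₂ / 2) 1 → θ' ≠ 0 →
        ‖g p.1‖ < ‖g (p.1 * Complex.exp ((θ' : ℂ) * Complex.I))‖ := by
      intro θ' hθ' hθ'0
      by_contra hcon
      push_neg at hcon
      obtain ⟨-, hqδ⟩ := hkey θ' hθ'
      have hHq : H (p.1 * Complex.exp ((θ' : ℂ) * Complex.I),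
          g (p.1 * Complex.exp ((θ' : ℂ) * Complex.I))) = 0 := (hδsub hqδ).mpr rfl
      have habs1 : ‖p.1 * Complex.exp ((θ' : ℂ) * Complex.I)‖ =
          ‖p.1‖ := by
        rw [norm_mul, Complex.norm_exp]
        simp
      have hq := hminp (p.1 * Complex.exp ((θ' : ℂ) * Complex.I),
        g (p.1 * Complex.exp ((θ' : ℂ) * Complex.I))) (le_of_eq habs1)
        (by rw [hpU]; exact hcon) hHq
      have h1 : p.1 * Complex.exp ((θ' : ℂ) * Complex.I) = p.1 := congrArg Prod.fst hq
      have hexp : Complex.exp ((θ' : ℂ) * Complex.I) = 1 :=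
        mul_left_cancel₀ hp1ne (by rw [h1, mul_one])
      obtain ⟨n, hn⟩ := Complex.exp_eq_one_iff.mp hexp
      have hcc : (θ' : ℂ) = (n : ℂ) * (2 * Real.pi) := by
        have h2 : (θ' : ℂ) * Complex.I = ((n : ℂ) * (2 * Real.pi)) * Complex.I := by
          rw [hn]; push_cast; ring
        exact mul_right_cancel₀ Complex.I_ne_zero h2
      have hθ'eq : θ' = (n : ℝ) * (2 * Real.pi) := by exact_mod_cast hcc
      have hn0 : n ≠ 0 := by
        rintro rfl
        simp at hθ'eq
        exact hθ'0 hθ'eq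
      have hn1 : (1:ℝ) ≤ |(n:ℝ)| := by
        rw [← Int.cast_abs]
        exact_mod_cast Int.one_le_abs hn0
      have hπ : Real.pi > 3 := Real.pi_gt_three
      have : |θ'| = |(n:ℝ)| * (2 * Real.pi) := by
        rw [hθ'eq, abs_mul, abs_of_pos (by positivity : (0:ℝ) < 2 * Real.pi)]
      have hbig : (6:ℝ) ≤ |θ'| := by
        rw [this]
        nlinarith
      have hsmall : |θ'| ≤ 1 := le_trans hθ' (min_le_right _ _)
      linarith
    -- the imaginary part of ζ g'(ζ)/g(ζ) vanishes
    have hF0 : (Complex.log (g (p.1 * Complex.exp (((0:ℝ) : ℂ) * Complex.I)) / g p.1)).re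
        = 0 := by
      simp [div_self hgp1.2]
    have hlocmin : IsLocalMin (fun θ' : ℝ =>
        (Complex.log (g (p.1 * Complex.exp ((θ' : ℂ) * Complex.I)) / g p.1)).re) 0 := by
      filter_upwards [Ioo_mem_nhds (neg_lt_zero.mpr hε₀) hε₀] with θ' hθ'
      rw [hF0]
      rcases eq_or_ne θ' 0 with rfl | hθ'0
      · rw [hF0]
      · have habs := hSMS θ' (le_of_lt (abs_lt.mpr ⟨hθ'.1, hθ'.2⟩)) hθ'0
        rw [Complex.log_re, norm_div]
        have hgp1pos : 0 < ‖g p.1‖ := norm_pos_iff.mpr hgp1.2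
        have : (1:ℝ) < ‖g (p.1 * Complex.exp ((θ' : ℂ) * Complex.I))‖
            / ‖g p.1‖ := (one_lt_div hgp1pos).mpr habs
        exact le_of_lt (Real.log_pos this)
    have hd : HasDerivAt (fun θ' : ℝ =>
        (Complex.log (g (p.1 * Complex.exp ((θ' : ℂ) * Complex.I)) / g p.1)).re)
        ((Complex.I * (p.1 * deriv g p.1 / g p.1)).re) 0 := by
      have h := keyDeriv g p.1 hgp1.1.differentiableAt hgp1.2
      rw [show (0:ℂ) = ((0:ℝ) : ℂ) by norm_num] at h
      exact h.real_of_complex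
    have him : (Complex.I * (p.1 * deriv g p.1 / g p.1)).re = 0 := by
      rw [← hd.deriv]
      exact hlocmin.deriv_eq_zero
    -- conclude
    have hθabs : |θ| ≤ min (ε₂ / 2) 1 := le_trans (abs_le.mpr ⟨hθl, hθu⟩) hεle
    have habs := hSMS θ hθabs hθ0
    have h2 : (Complex.I * (θ:ℂ) * (p.1 * deriv g p.1 / g p.1)).re = 0 := by
      have hre : Complex.I * (θ:ℂ) * (p.1 * deriv g p.1 / g p.1)
          = (θ:ℂ) * (Complex.I * (p.1 * deriv g p.1 / g p.1)) := by ring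
      rw [hre, Complex.re_ofReal_mul, him, mul_zero]
    have hgp1pos : 0 < ‖g p.1‖ := norm_pos_iff.mpr hgp1.2
    show 0 < (phase g p.1 (θ:ℂ)).re
    rw [phase, Complex.sub_re, h2, sub_zero, Complex.log_re, norm_div]
    exact Real.log_pos ((one_lt_div hgp1pos).mpr habs)
end

section
/- Let H(z,w) := 1 − z − w − zw. For every ζ ∈ (0,1), the point (ζ, (1−ζ)/(1+ζ)) is a strictly minimal simple zero of H; moreover, with ω := (1−ζ)/(1+ζ), a pair (r,s) of positive reals satisfies (r,s) ∈ dir(ζ,ω) if and only if r/s = 2ζ/(1−ζ²), and this holds if and only if ζ = (√(r²+s²) − s)/r and ω = (√(r²+s²) − r)/s. -/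
open Complex Filter Topology

/-- Partial derivative of `H` with respect to the first variable. -/
noncomputable def Hz (H : ℂ × ℂ → ℂ) (p : ℂ × ℂ) : ℂ := deriv (fun z => H (z, p.2)) p.1

/-- The denominator of the Delannoy generating function: `H(z,w) = 1 − z − w − zw`. -/
noncomputable def delH : ℂ × ℂ → ℂ := fun x => 1 - x.1 - x.2 - x.1 * x.2

/-- Application 1 (Lattice paths): for `ζ ∈ (0,1)` and `ω = (1−ζ)/(1+ζ)`, the point
`(ζ,ω)` is a strictly minimal simple zero of `1−z−w−zw`; moreover positive reals `(r,s)`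
satisfy `(r,s) ∈ dir(ζ,ω)` iff `r/s = 2ζ/(1−ζ²)`, iff `ζ = (√(r²+s²)−s)/r` and
`ω = (√(r²+s²)−r)/s`. -/
theorem stmt11 (ζ : ℝ) (hζ0 : 0 < ζ) (hζ1 : ζ < 1) :
    StrictlyMinimalSimpleZero delH ((ζ : ℂ), (((1 - ζ) / (1 + ζ) : ℝ) : ℂ)) ∧
    ∀ r s : ℝ, 0 < r → 0 < s →
      (((r : ℂ) * (((1 - ζ) / (1 + ζ) : ℝ) : ℂ) * Hw delH ((ζ : ℂ), (((1 - ζ) / (1 + ζ) : ℝ) : ℂ))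
          - (s : ℂ) * (ζ : ℂ) * Hz delH ((ζ : ℂ), (((1 - ζ) / (1 + ζ) : ℝ) : ℂ)) = 0) ↔
        r / s = 2 * ζ / (1 - ζ ^ 2)) ∧
      (r / s = 2 * ζ / (1 - ζ ^ 2) ↔
        (ζ = (Real.sqrt (r ^ 2 + s ^ 2) - s) / r ∧
          (1 - ζ) / (1 + ζ) = (Real.sqrt (r ^ 2 + s ^ 2) - r) / s)) := by
  have h1ζ : (0:ℝ) < 1 + ζ := by linarith
  have h1ζ' : (1:ℝ) + ζ ≠ 0 := ne_of_gt h1ζ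
  set ωr : ℝ := (1 - ζ) / (1 + ζ) with hωr
  have hω0 : 0 < ωr := div_pos (by linarith) h1ζ
  have hω1 : ωr < 1 := by rw [hωr, div_lt_one h1ζ]; linarith
  have hkey : ζ + ωr + ζ * ωr = 1 := by
    rw [hωr]; field_simp; ring
  set z0 : ℂ := (ζ : ℂ) with hz0
  set w0 : ℂ := (ωr : ℂ) with hw0
  -- partial derivatives
  have hHw : Hw delH (z0, w0) = -1 - z0 := by
    have h : HasDerivAt (fun w : ℂ => delH (z0, w)) (-1 - z0) w0 := by
      have := (((hasDerivAt_id w0).const_sub (1 - z0)).sub ((hasDerivAt_id w0).const_mul z0))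
      have hf : (fun w : ℂ => delH (z0, w)) = ((fun x => 1 - z0 - id x) - fun y => z0 * id y) := by
        funext w; simp only [delH, id, Pi.sub_apply]
      rw [hf]; exact this.congr_deriv (by ring)
    exact h.deriv
  have hHz : Hz delH (z0, w0) = -1 - w0 := by
    have h : HasDerivAt (fun z : ℂ => delH (z, w0)) (-1 - w0) z0 := by
      have := (((hasDerivAt_id z0).const_sub (1 - w0)).sub ((hasDerivAt_id z0).mul_const w0))
      have hf : (fun z : ℂ => delH (z, w0)) = ((fun x => 1 - w0 - id x) - fun y => id y * w0) := by
        funext z; simp only [delH, id, Pi.sub_apply]; ring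
      rw [hf]; exact this.congr_deriv (by ring)
    exact h.deriv
  refine ⟨⟨?_, ?_, ?_, ?_⟩, ?_⟩
  · -- H p = 0
    show (1:ℂ) - z0 - w0 - z0 * w0 = 0
    rw [hz0, hw0]
    have : ((ζ + ωr + ζ * ωr : ℝ) : ℂ) = 1 := by rw [hkey]; norm_num
    push_cast at this ⊢
    linear_combination -this
  · -- fderiv ≠ 0
    have h1 : HasFDerivAt (fun x : ℂ × ℂ => x.1) (ContinuousLinearMap.fst ℂ ℂ ℂ) (z0, w0) :=
      hasFDerivAt_fst
    have h2 : HasFDerivAt (fun x : ℂ × ℂ => x.2) (ContinuousLinearMap.snd ℂ ℂ ℂ) (z0, w0) :=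
      hasFDerivAt_snd
    have hm := h1.mul h2
    have hH : HasFDerivAt delH
        (0 - ContinuousLinearMap.fst ℂ ℂ ℂ - ContinuousLinearMap.snd ℂ ℂ ℂ -
          (z0 • ContinuousLinearMap.snd ℂ ℂ ℂ + w0 • ContinuousLinearMap.fst ℂ ℂ ℂ)) (z0, w0) :=
      (((hasFDerivAt_const (1:ℂ) (z0, w0)).sub h1).sub h2).sub hm
    intro hzero
    have := hH.fderiv
    rw [hzero] at this
    have happ := congrArg (fun L => L ((1:ℂ), (0:ℂ))) this.symm
    simp at happ
    have : (1:ℝ) + ωr = 0 := by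
      have : ((1 + ωr : ℝ) : ℂ) = 0 := by push_cast; linear_combination -happ
      exact_mod_cast this
    linarith
  · -- nonvanishing of coordinates
    show z0 * w0 ≠ 0
    rw [hz0, hw0]
    simp only [ne_eq, mul_eq_zero, Complex.ofReal_eq_zero]
    push_neg
    exact ⟨ne_of_gt hζ0, ne_of_gt hω0⟩
  · -- strict minimality
    rintro ⟨z, w⟩ hz hw hq
    simp only at hz hw
    have habsz : ‖z0‖ = ζ := by
      rw [hz0, Complex.norm_real, Real.norm_of_nonneg hζ0.le]
    have habsw : ‖w0‖ = ωr := by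
      rw [hw0, Complex.norm_real, Real.norm_of_nonneg hω0.le]
    rw [habsz] at hz
    rw [habsw] at hw
    have hre : z.re + w.re + (z * w).re = 1 := by
      have : (1:ℂ) - z - w - z * w = 0 := hq
      have := congrArg Complex.re this
      simp [Complex.sub_re, Complex.one_re] at this
      rw [Complex.mul_re]
      linarith
    have hrz : z.re ≤ ‖z‖ := Complex.re_le_norm z
    have hrw : w.re ≤ ‖w‖ := Complex.re_le_norm w
    have hrzw : (z * w).re ≤ ‖z‖ * ‖w‖ := by
      calc (z * w).re ≤ ‖z * w‖ := Complex.re_le_norm _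
        _ = ‖z‖ * ‖w‖ := norm_mul _ _
    have hzwle : ‖z‖ * ‖w‖ ≤ ζ * ωr :=
      mul_le_mul hz hw (norm_nonneg w) (le_of_lt hζ0)
    have hez : z.re = ζ := by linarith
    have hew : w.re = ωr := by linarith
    have haz : ‖z‖ = ζ := le_antisymm hz (hez ▸ hrz)
    have haw : ‖w‖ = ωr := le_antisymm hw (hew ▸ hrw)
    have hiz : z.im = 0 := by
      have := Complex.sq_norm z
      rw [haz, Complex.normSq_apply] at this
      nlinarith [sq_nonneg z.im]
    have hiw : w.im = 0 := by
      have := Complex.sq_norm w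
      rw [haw, Complex.normSq_apply] at this
      nlinarith [sq_nonneg w.im]
    have : z = z0 := by
      rw [hz0]; exact Complex.ext (by simpa using hez) (by simpa using hiz)
    have hww : w = w0 := by
      rw [hw0]; exact Complex.ext (by simpa using hew) (by simpa using hiw)
    simp [this, hww]
  · -- the dir characterization
    intro r s hr hs
    have hs' : s ≠ 0 := ne_of_gt hs
    have hr' : r ≠ 0 := ne_of_gt hr
    have h1mζ : (1:ℝ) - ζ ^ 2 ≠ 0 := by nlinarith
    constructor
    · -- first iff
      rw [hHw, hHz]
      have hcast : (r : ℂ) * w0 * (-1 - z0) - (s : ℂ) * z0 * (-1 - w0)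
          = ((r * ωr * (-1 - ζ) - s * ζ * (-1 - ωr) : ℝ) : ℂ) := by
        rw [hz0, hw0]; push_cast; ring
      rw [hcast, Complex.ofReal_eq_zero]
      rw [hωr]
      rw [div_eq_div_iff hs' h1mζ]
      constructor
      · intro h
        field_simp at h
        nlinarith [h]
      · intro h
        field_simp
        nlinarith [h]
    · -- second iff
      have hT2 : Real.sqrt (r ^ 2 + s ^ 2) ^ 2 = r ^ 2 + s ^ 2 := Real.sq_sqrt (by positivity)
      constructor
      · intro h
        rw [div_eq_div_iff hs' h1mζ] at h
        have hTval : Real.sqrt (r ^ 2 + s ^ 2) = r * ζ + s := by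
          rw [show r ^ 2 + s ^ 2 = (r * ζ + s) ^ 2 by linear_combination r * h]
          exact Real.sqrt_sq (by positivity)
        rw [hTval]
        constructor
        · rw [eq_div_iff hr']; ring
        · rw [hωr, div_eq_div_iff h1ζ' hs']; linear_combination h
      · rintro ⟨h1, _⟩
        rw [eq_div_iff hr'] at h1
        have hTv : Real.sqrt (r ^ 2 + s ^ 2) = ζ * r + s := by linarith
        have h2 : (ζ * r + s) ^ 2 = r ^ 2 + s ^ 2 := by rw [← hTv]; exact hT2
        rw [div_eq_div_iff hs' h1mζ]
        have h3 : r * (r * (1 - ζ ^ 2)) = r * (2 * ζ * s) := by linear_combination -h2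
        exact mul_left_cancel₀ hr' h3
end
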